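/- Let g be a Lie algebra of dimension 4 over a field. Then the derived algebra [g,g] is a proper ideal of g, i.e. [g,g] ≠ g. -/

import Mathlib

open Module LinearMap Submodule

section Infra
variable {g : Type*} [LieRing g] [LieAlgebra ℂ g] [FiniteDimensional ℂ g]
attribute [local instance 100] LieRing.ofAssociativeRing

/-- If the derived algebra is everything, any subspace containing all brackets is everything. -/
lemma aux_perfect_span (h : ⁅(⊤ : LieIdeal ℂ g), (⊤ : LieIdeal ℂ g)⁆ = ⊤)
    (V : Submodule ℂ g) (hV : ∀ a b : g, ⁅a, b⁆ ∈ V) : V = ⊤ := by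
  rw [eq_top_iff]
  have h1 : ((⁅(⊤ : LieIdeal ℂ g), (⊤ : LieIdeal ℂ g)⁆ : LieIdeal ℂ g) : Submodule ℂ g)
      = Submodule.span ℂ {m | ∃ x ∈ (⊤ : LieIdeal ℂ g), ∃ n ∈ (⊤ : LieIdeal ℂ g), ⁅x, n⁆ = m} :=
    LieSubmodule.lieIdeal_oper_eq_linear_span' ..
  rw [h] at h1
  have h2 : (⊤ : Submodule ℂ g) = ((⊤ : LieIdeal ℂ g) : Submodule ℂ g) := by simp
  rw [h2, h1]
  refine Submodule.span_le.mpr ?_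
  rintro m ⟨x, -, n, -, rfl⟩
  exact hV x n

lemma aux_trace_ad_zero (h : ⁅(⊤ : LieIdeal ℂ g), (⊤ : LieIdeal ℂ g)⁆ = ⊤) (z : g) :
    LinearMap.trace ℂ g (LieModule.toEnd ℂ g g z) = 0 := by
  set T : g →ₗ[ℂ] ℂ := (LinearMap.trace ℂ g) ∘ₗ (LieModule.toEnd ℂ g g).toLinearMap with hT
  have key : LinearMap.ker T = ⊤ := by
    apply aux_perfect_span h
    intro a b
    simp only [LinearMap.mem_ker, hT, LinearMap.comp_apply, LieHom.coe_toLinearMap,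
      LieHom.map_lie]
    rw [Ring.lie_def, map_sub, LinearMap.trace_mul_comm, sub_self]
  have : z ∈ LinearMap.ker T := key ▸ Submodule.mem_top
  simpa [hT] using this

lemma aux_not_solvable (h : ⁅(⊤ : LieIdeal ℂ g), (⊤ : LieIdeal ℂ g)⁆ = ⊤)
    (hdim : Module.finrank ℂ g = 4) : ¬ LieAlgebra.IsSolvable g := by
  intro hs
  obtain ⟨k, hk⟩ := @LieAlgebra.IsSolvable.solvable ℂ g _ _ _ hs
  have h1 : LieAlgebra.derivedSeries ℂ g 1 = ⊤ := by
    simp only [LieAlgebra.derivedSeries_def, LieAlgebra.derivedSeriesOfIdeal_succ,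
      LieAlgebra.derivedSeriesOfIdeal_zero]
    exact h
  have := LieIdeal.derivedSeries_eq_top k h1
  rw [hk] at this
  have hsub : Subsingleton g := by
    constructor
    intro a b
    have ha : a ∈ (⊥ : LieIdeal ℂ g) := this ▸ LieSubmodule.mem_top _
    have hb : b ∈ (⊥ : LieIdeal ℂ g) := this ▸ LieSubmodule.mem_top _
    rw [LieSubmodule.mem_bot] at ha hb
    rw [ha, hb]
  rw [finrank_zero_of_subsingleton] at hdim
  norm_num at hdim

end Infra


open Module LinearMap Submodule Set Function

section Trace
variable {g : Type*} [AddCommGroup g] [Module ℂ g] [FiniteDimensional ℂ g]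

lemma aux_trace_restrict (f : Module.End ℂ g) (μ : ℂ)
    (h1 : MapsTo f (f.maxGenEigenspace μ) (f.maxGenEigenspace μ)) :
    LinearMap.trace ℂ _ (f.restrict h1) = μ * (finrank ℂ (f.maxGenEigenspace μ)) := by
  have h2 : MapsTo (f - algebraMap ℂ (Module.End ℂ g) μ)
      (f.maxGenEigenspace μ) (f.maxGenEigenspace μ) :=
    Module.End.mapsTo_maxGenEigenspace_of_comm (Algebra.mul_sub_algebraMap_commutes f μ) μ
  have h3 : MapsTo (algebraMap ℂ (Module.End ℂ g) μ)
      (f.maxGenEigenspace μ) (f.maxGenEigenspace μ) := by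
    intro v hv
    simpa [Module.algebraMap_end_apply] using Submodule.smul_mem _ μ hv
  have hnil : IsNilpotent ((f - algebraMap ℂ (Module.End ℂ g) μ).restrict h2) :=
    Module.End.isNilpotent_restrict_maxGenEigenspace_sub_algebraMap f μ
  have htr0 : LinearMap.trace ℂ _ ((f - algebraMap ℂ (Module.End ℂ g) μ).restrict h2) = 0 :=
    (LinearMap.isNilpotent_trace_of_isNilpotent hnil).eq_zero
  have hsplit : (f - algebraMap ℂ (Module.End ℂ g) μ).restrict h2
      = f.restrict h1 - (algebraMap ℂ (Module.End ℂ g) μ).restrict h3 := by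
    ext v; rfl
  have halg : (algebraMap ℂ (Module.End ℂ g) μ).restrict h3
      = μ • (1 : Module.End ℂ (f.maxGenEigenspace μ)) := by
    ext v; rfl
  rw [hsplit, map_sub, halg, map_smul, LinearMap.trace_one] at htr0
  simp only [smul_eq_mul] at htr0
  linear_combination htr0

lemma aux_finite_weights (f : Module.End ℂ g) : {μ : ℂ | f.maxGenEigenspace μ ≠ ⊥}.Finite :=
  WellFoundedGT.finite_ne_bot_of_iSupIndep f.independent_maxGenEigenspace

lemma aux_isInternal (f : Module.End ℂ g) : DirectSum.IsInternal f.maxGenEigenspace :=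
  DirectSum.isInternal_submodule_of_iSupIndep_of_iSup_eq_top
    f.independent_maxGenEigenspace f.iSup_maxGenEigenspace_eq_top

lemma aux_dim_sum (f : Module.End ℂ g) :
    (finrank ℂ g : ℂ) = ∑ μ ∈ (aux_finite_weights f).toFinset,
      (finrank ℂ (f.maxGenEigenspace μ) : ℂ) := by
  have hmaps : ∀ μ : ℂ, MapsTo (1 : Module.End ℂ g)
      (f.maxGenEigenspace μ) (f.maxGenEigenspace μ) := fun μ v hv => by simpa using hv
  have := LinearMap.trace_eq_sum_trace_restrict' (aux_isInternal f) (aux_finite_weights f) hmaps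
  rw [LinearMap.trace_one] at this
  rw [this]
  congr 1
  ext μ
  have : (1 : Module.End ℂ g).restrict (hmaps μ) = 1 := by
    ext v; rfl
  rw [this, LinearMap.trace_one]

lemma aux_trace_sum (f : Module.End ℂ g) :
    LinearMap.trace ℂ g f = ∑ μ ∈ (aux_finite_weights f).toFinset,
      μ * (finrank ℂ (f.maxGenEigenspace μ) : ℂ) := by
  have hmaps : ∀ μ : ℂ, MapsTo f (f.maxGenEigenspace μ) (f.maxGenEigenspace μ) :=
    fun μ => Module.End.mapsTo_maxGenEigenspace_of_comm (Commute.refl f) μ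
  rw [LinearMap.trace_eq_sum_trace_restrict' (aux_isInternal f) (aux_finite_weights f) hmaps]
  exact Finset.sum_congr rfl fun μ _ => aux_trace_restrict f μ (hmaps μ)

end Trace


open Module LinearMap Submodule Set Function

section Geo
variable {g : Type*} [LieRing g] [LieAlgebra ℂ g] [FiniteDimensional ℂ g]

/-- Double induction over a spanning family of subspaces. -/
lemma aux_pairs {E : ℂ → Submodule ℂ g} (hsup : ⨆ μ, E μ = ⊤) {V : Submodule ℂ g}
    (hp : ∀ μ ν : ℂ, ∀ a ∈ E μ, ∀ b ∈ E ν, ⁅a, b⁆ ∈ V) (a b : g) : ⁅a, b⁆ ∈ V := by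
  have ha : a ∈ ⨆ μ, E μ := hsup ▸ Submodule.mem_top
  have hb : b ∈ ⨆ μ, E μ := hsup ▸ Submodule.mem_top
  refine Submodule.iSup_induction E (motive := fun a => ⁅a, b⁆ ∈ V) ha (fun μ a haμ => ?_)
    (by simp) (fun a₁ a₂ h1 h2 => by show ⁅a₁ + a₂, b⁆ ∈ V; rw [add_lie]; exact V.add_mem h1 h2)
  refine Submodule.iSup_induction E (motive := fun b => ⁅a, b⁆ ∈ V) hb (fun ν b hbν => ?_)
    (by simp) (fun b₁ b₂ h1 h2 => by show ⁅a, b₁ + b₂⁆ ∈ V; rw [lie_add]; exact V.add_mem h1 h2)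
  exact hp μ ν a haμ b hbν

/-- On a 1-dimensional maximal generalized eigenspace, `f` acts as the scalar `μ`. -/
lemma aux_one_dim_eigen (f : Module.End ℂ g) (μ : ℂ)
    (hdim : finrank ℂ (f.maxGenEigenspace μ) = 1) :
    ∀ v ∈ f.maxGenEigenspace μ, f v = μ • v := by
  intro v hv
  rcases eq_or_ne v 0 with rfl | hv0
  · simp
  have hfv : f v ∈ f.maxGenEigenspace μ :=
    Module.End.mapsTo_maxGenEigenspace_of_comm (Commute.refl f) μ hv
  have hspan : f.maxGenEigenspace μ = Submodule.span ℂ {v} := by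
    apply (Submodule.eq_of_le_of_finrank_le
      ((Submodule.span_singleton_le_iff_mem v _).mpr hv) ?_).symm
    rw [hdim, finrank_span_singleton hv0]
  rw [hspan] at hfv
  obtain ⟨c, hc⟩ := Submodule.mem_span_singleton.mp hfv
  have hiter : ∀ k : ℕ, ((f - μ • (1 : Module.End ℂ g)) ^ k) v = (c - μ) ^ k • v := by
    intro k
    induction k with
    | zero => simp
    | succ k ih =>
      have hstep : (f - μ • (1 : Module.End ℂ g)) v = (c - μ) • v := by
        simp [sub_smul, ← hc]
      rw [pow_succ, Module.End.mul_apply, hstep, map_smul, ih, smul_smul, ← pow_succ']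
  obtain ⟨k, hk⟩ := (Module.End.mem_maxGenEigenspace f μ v).mp hv
  rw [hiter k] at hk
  have hcμ : c = μ := by
    have h1 := (smul_eq_zero.mp hk).resolve_right hv0
    have h2 := pow_eq_zero_iff'.mp h1
    exact sub_eq_zero.mp h2.1
  rw [← hc, hcμ]

end Geo


lemma aux_combinat (W : Finset ℂ) (d : ℂ → ℕ) (h0 : (0:ℂ) ∈ W)
    (hd : ∀ μ ∈ W, 1 ≤ d μ) (hsum : ∑ μ ∈ W, d μ = 4)
    (htr : ∑ μ ∈ W, μ * (d μ : ℂ) = 0) (hne : ∃ l ∈ W, l ≠ 0) :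
    (d 0 = 1 ∧ ∀ l ∈ W, l ≠ 0 → -l ∉ W) ∨
    (∃ l : ℂ, l ≠ 0 ∧ W = {0, l, -l} ∧ d 0 = 2 ∧ d l = 1 ∧ d (-l) = 1) := by
  classical
  set W' := W.erase 0 with hW'def
  have hWins : W = insert 0 W' := (Finset.insert_erase h0).symm
  have hnm : (0:ℂ) ∉ W' := Finset.notMem_erase _ _
  rw [hWins, Finset.sum_insert hnm] at hsum htr
  simp only [Nat.cast_ofNat, zero_mul, zero_add] at htr
  obtain ⟨l, hlW, hl0⟩ := hne
  have hlW' : l ∈ W' := Finset.mem_erase.mpr ⟨hl0, hlW⟩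
  have hd' : ∀ μ ∈ W', 1 ≤ d μ := fun μ hμ => hd μ (Finset.mem_erase.mp hμ).2
  have hne0' : ∀ μ ∈ W', μ ≠ 0 := fun μ hμ => (Finset.mem_erase.mp hμ).1
  have hd0 : 1 ≤ d 0 := hd 0 h0
  have hcard_le : W'.card ≤ ∑ μ ∈ W', d μ := by
    simpa using Finset.card_nsmul_le_sum W' d 1 hd'
  have hc1 : 1 ≤ W'.card := Finset.card_pos.mpr ⟨l, hlW'⟩
  have hcases : W'.card = 1 ∨ W'.card = 2 ∨ W'.card = 3 := by omega
  rcases hcases with h1 | h2 | h3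
  · -- one nonzero weight: impossible
    obtain ⟨a, ha⟩ := Finset.card_eq_one.mp h1
    rw [ha, Finset.sum_singleton] at htr
    have ha0 : a ≠ 0 := hne0' a (by rw [ha]; exact Finset.mem_singleton_self a)
    have hda : 1 ≤ d a := hd' a (by rw [ha]; exact Finset.mem_singleton_self a)
    have : (d a : ℂ) ≠ 0 := Nat.cast_ne_zero.mpr (by omega)
    exact absurd (mul_eq_zero.mp htr) (by tauto)
  · -- two nonzero weights
    obtain ⟨a, b, hab, hW2⟩ := Finset.card_eq_two.mp h2
    have haW : a ∈ W' := by rw [hW2]; simp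
    have hbW : b ∈ W' := by rw [hW2]; simp
    have ha0 : a ≠ 0 := hne0' a haW
    have hb0 : b ≠ 0 := hne0' b hbW
    rw [hW2, Finset.sum_pair hab] at htr hsum
    have hdd : d 0 = 1 ∧ d a + d b = 3 ∨ d 0 = 2 ∧ d a = 1 ∧ d b = 1 := by
      have := hd' a haW; have := hd' b hbW; omega
    rcases hdd with ⟨hd01, hab3⟩ | ⟨hd02, hda1, hdb1⟩
    · -- d 0 = 1, outcome A
      left
      refine ⟨hd01, ?_⟩
      intro m hm hm0
      rw [hWins, hW2] at hm ⊢
      simp only [Finset.mem_insert, Finset.mem_singleton] at hm ⊢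
      push_neg
      have hcc : d a = 1 ∧ d b = 2 ∨ d a = 2 ∧ d b = 1 := by
        have := hd' a haW; have := hd' b hbW; omega
      rcases hcc with ⟨hda, hdb⟩ | ⟨hda, hdb⟩
      · -- a + 2b = 0
        rw [hda, hdb] at htr; push_cast at htr
        rcases hm with rfl | rfl | rfl
        · exact absurd rfl hm0
        · exact ⟨fun h => hm0 (by linear_combination -h),
            fun h => hm0 (by linear_combination -h/2),
            fun h => hm0 (by linear_combination -htr - 2*h)⟩
        · exact ⟨fun h => hm0 (by linear_combination -h),
            fun h => hm0 (by linear_combination htr + h),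
            fun h => hm0 (by linear_combination -h/2)⟩
      · -- 2a + b = 0
        rw [hda, hdb] at htr; push_cast at htr
        rcases hm with rfl | rfl | rfl
        · exact absurd rfl hm0
        · exact ⟨fun h => hm0 (by linear_combination -h),
            fun h => hm0 (by linear_combination -h/2),
            fun h => hm0 (by linear_combination htr + h)⟩
        · exact ⟨fun h => hm0 (by linear_combination -h),
            fun h => hm0 (by linear_combination -htr - 2*h),
            fun h => hm0 (by linear_combination -h/2)⟩
    · -- d 0 = 2, outcome B
      right
      rw [hda1, hdb1] at htr; push_cast at htr
      have hba : b = -a := by linear_combination htr - a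
      refine ⟨a, ha0, ?_, hd02, hda1, by rw [← hba]; exact hdb1⟩
      rw [hWins, hW2, hba]
  · -- three nonzero weights
    obtain ⟨a, b, c, hab, hac, hbc, hW3⟩ := Finset.card_eq_three.mp h3
    have haW : a ∈ W' := by rw [hW3]; simp
    have hbW : b ∈ W' := by rw [hW3]; simp
    have hcW : c ∈ W' := by rw [hW3]; simp
    have ha0 : a ≠ 0 := hne0' a haW
    have hb0 : b ≠ 0 := hne0' b hbW
    have hc0 : c ≠ 0 := hne0' c hcW
    have hsplit : ({a, b, c} : Finset ℂ) = insert a {b, c} := rfl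
    rw [hW3, hsplit, Finset.sum_insert (by simp [hab, hac]), Finset.sum_pair hbc] at htr hsum
    have hall : d 0 = 1 ∧ d a = 1 ∧ d b = 1 ∧ d c = 1 := by
      have := hd' a haW; have := hd' b hbW; have := hd' c hcW; omega
    obtain ⟨hd01, hda, hdb, hdc⟩ := hall
    rw [hda, hdb, hdc] at htr; push_cast at htr
    left
    refine ⟨hd01, ?_⟩
    intro m hm hm0
    rw [hWins, hW3] at hm ⊢
    simp only [Finset.mem_insert, Finset.mem_singleton] at hm ⊢
    push_neg
    rcases hm with rfl | rfl | rfl | rfl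
    · exact absurd rfl hm0
    · exact ⟨fun h => hm0 (by linear_combination -h),
        fun h => hm0 (by linear_combination -h/2),
        fun h => hc0 (by linear_combination htr + h),
        fun h => hb0 (by linear_combination htr + h)⟩
    · exact ⟨fun h => hm0 (by linear_combination -h),
        fun h => hc0 (by linear_combination htr + h),
        fun h => hm0 (by linear_combination -h/2),
        fun h => ha0 (by linear_combination htr + h)⟩
    · exact ⟨fun h => hm0 (by linear_combination -h),
        fun h => hb0 (by linear_combination htr + h),
        fun h => ha0 (by linear_combination htr + h),
        fun h => hm0 (by linear_combination -h/2)⟩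


open Module LinearMap Submodule Set Function

section Helpers
variable {g : Type*} [LieRing g] [LieAlgebra ℂ g] [FiniteDimensional ℂ g]

lemma aux_dim_one_span {V : Submodule ℂ g} (h1 : finrank ℂ V = 1) {v : g}
    (hv : v ∈ V) (h0 : v ≠ 0) : V = Submodule.span ℂ {v} := by
  refine (Submodule.eq_of_le_of_finrank_le ((Submodule.span_singleton_le_iff_mem v _).mpr hv)
    ?_).symm
  rw [h1, finrank_span_singleton h0]

lemma aux_indep {x y : g} (hx : x ≠ 0) (hy : y ∉ Submodule.span ℂ {x}) {s t : ℂ}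
    (h : s • x + t • y = 0) : s = 0 ∧ t = 0 := by
  rcases eq_or_ne t 0 with rfl | ht
  · rw [zero_smul, add_zero, smul_eq_zero] at h
    exact ⟨h.resolve_right hx, rfl⟩
  · exfalso
    apply hy
    rw [← Submodule.smul_mem_iff _ ht]
    have hty : t • y = (-s) • x := by linear_combination (norm := module) h
    rw [hty]
    exact Submodule.smul_mem _ _ (Submodule.mem_span_singleton_self x)

lemma aux_span_pair_dim_two {x y : g} (hx : x ≠ 0) (hy : y ∉ Submodule.span ℂ {x}) :
    finrank ℂ (Submodule.span ℂ ({x, y} : Set g)) = 2 := by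
  have hy0 : y ≠ 0 := fun h => hy (h ▸ Submodule.zero_mem _)
  have hdisj : Disjoint (Submodule.span ℂ ({x} : Set g)) (Submodule.span ℂ ({y} : Set g)) := by
    rw [Submodule.disjoint_def]
    intro z hz1 hz2
    obtain ⟨s, rfl⟩ := Submodule.mem_span_singleton.mp hz1
    obtain ⟨t, hts⟩ := Submodule.mem_span_singleton.mp hz2
    rcases eq_or_ne s 0 with rfl | hs
    · simp
    · exfalso
      apply hy
      have ht : t ≠ 0 := by
        rintro rfl
        rw [zero_smul] at hts
        exact hs ((smul_eq_zero.mp hts.symm).resolve_right hx)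
      rw [← Submodule.smul_mem_iff _ ht, hts]
      exact Submodule.smul_mem _ _ (Submodule.mem_span_singleton_self x)
  have hkey := Submodule.finrank_sup_add_finrank_inf_eq
    (Submodule.span ℂ ({x} : Set g)) (Submodule.span ℂ ({y} : Set g))
  rw [hdisj.eq_bot, ← Submodule.span_union, finrank_span_singleton hx,
    finrank_span_singleton hy0] at hkey
  have hxy : ({x} : Set g) ∪ {y} = {x, y} := by
    ext z; simp [or_comm]
  rw [hxy] at hkey
  simpa using hkey

end Helpers


section Main
variable {g : Type*} [LieRing g] [LieAlgebra ℂ g] [FiniteDimensional ℂ g]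

lemma aux_main (hdim : Module.finrank ℂ g = 4)
    (hperf : ⁅(⊤ : LieIdeal ℂ g), (⊤ : LieIdeal ℂ g)⁆ = ⊤) : False := by
  classical
  -- find x with ad x not nilpotent
  have hnotsolv := aux_not_solvable hperf hdim
  have hnotnilp : ¬ LieModule.IsNilpotent g g := by
    intro h
    exact hnotsolv (LieAlgebra.isSolvable_of_isNilpotent g)
  obtain ⟨x, hxnil⟩ : ∃ x : g, ¬ IsNilpotent (LieModule.toEnd ℂ g g x) := by
    by_contra hc
    push_neg at hc
    exact hnotnilp ((LieModule.isNilpotent_iff_forall (R := ℂ) (L := g) (M := g)).mpr hc)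
  have hx_ne : x ≠ 0 := by
    rintro rfl
    exact hxnil (by rw [map_zero]; exact ⟨1, by simp⟩)
  set f : Module.End ℂ g := LieModule.toEnd ℂ g g x with hfdef
  set E : ℂ → Submodule ℂ g := fun μ => f.maxGenEigenspace μ with hEdef
  have hfapp : ∀ y : g, f y = ⁅x, y⁆ := fun y => LieModule.toEnd_apply_apply ℂ g g x y
  have hsup : ⨆ μ, E μ = ⊤ := f.iSup_maxGenEigenspace_eq_top
  have hind : iSupIndep E := f.independent_maxGenEigenspace
  have hbr_mem : ∀ (μ ν : ℂ) (a b : g), a ∈ E μ → b ∈ E ν → ⁅a, b⁆ ∈ E (μ + ν) :=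
    fun μ ν a b ha hb => LieModule.lie_mem_maxGenEigenspace_toEnd ha hb
  have hx0 : x ∈ E 0 := by
    rw [hEdef, Module.End.mem_maxGenEigenspace]
    exact ⟨1, by simp [hfdef, hfapp]⟩
  -- weights
  have hfin : {μ : ℂ | f.maxGenEigenspace μ ≠ ⊥}.Finite := aux_finite_weights f
  set W : Finset ℂ := hfin.toFinset with hWdef
  have hmemW : ∀ μ : ℂ, μ ∈ W ↔ E μ ≠ ⊥ := fun μ => by simp [hWdef, hEdef]
  have h0W : (0:ℂ) ∈ W := (hmemW 0).mpr fun hbot => hx_ne (by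
    have := hbot ▸ hx0; simpa using this)
  have hlW : ∃ l ∈ W, l ≠ 0 := by
    by_contra hc
    push_neg at hc
    have hE0top : E 0 = ⊤ := by
      rw [← hsup]
      refine le_antisymm (le_iSup E 0) (iSup_le fun μ => ?_)
      rcases eq_or_ne μ 0 with rfl | hμ
      · exact le_rfl
      · have : E μ = ⊥ := by
          by_contra hb
          exact hμ (hc μ ((hmemW μ).mpr hb))
        rw [this]; exact bot_le
    apply hxnil
    have h1 : f.maxGenEigenspace 0 = ⊤ := hE0top
    rw [Module.End.maxGenEigenspace_eq_genEigenspace_finrank] at h1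
    refine ⟨finrank ℂ g, ?_⟩
    ext v
    have hv : v ∈ f.genEigenspace 0 (finrank ℂ g : ℕ) := h1 ▸ Submodule.mem_top
    rw [Module.End.mem_genEigenspace_nat] at hv
    simpa using hv
  -- dimension and trace bookkeeping
  set d : ℂ → ℕ := fun μ => finrank ℂ (E μ) with hddef
  have hd1 : ∀ μ ∈ W, 1 ≤ d μ := by
    intro μ hμ
    have : E μ ≠ ⊥ := (hmemW μ).mp hμ
    have h2 : finrank ℂ (E μ) ≠ 0 := fun h => this (Submodule.finrank_eq_zero.mp h)
    exact Nat.pos_of_ne_zero h2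
  have hdsum : ∑ μ ∈ W, d μ = 4 := by
    have h := aux_dim_sum f
    rw [hdim] at h
    exact_mod_cast h.symm
  have htrsum : ∑ μ ∈ W, μ * (d μ : ℂ) = 0 := by
    have h := aux_trace_sum f
    rw [aux_trace_ad_zero hperf x] at h
    exact h.symm
  rcases aux_combinat W d h0W hd1 hdsum htrsum hlW with ⟨hd01, hA⟩ |
    ⟨l, hl0, hWeq, hd02, hdl, hdnl⟩
  · -- Case A: d 0 = 1 and no opposite pairs of nonzero weights
    set m : Submodule ℂ g := ⨆ μ, ⨆ (_ : μ ≠ 0), E μ with hmdef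
    have hdisj : Disjoint (E 0) m := hind 0
    have hsupm : E 0 ⊔ m = ⊤ := by
      rw [iSup_split_single E 0] at hsup
      exact hsup
    have hrank : finrank ℂ (E 0) + finrank ℂ m = 4 := by
      have hh := Submodule.finrank_sup_add_finrank_inf_eq (E 0) m
      rw [hsupm, hdisj.eq_bot, finrank_top, hdim, finrank_bot] at hh
      omega
    have hE0span : E 0 = Submodule.span ℂ {x} := aux_dim_one_span hd01 hx0 hx_ne
    have hbrm : ∀ a b : g, ⁅a, b⁆ ∈ m := by
      refine aux_pairs hsup ?_
      intro μ ν a ha b hb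
      rcases eq_or_ne (μ + ν) 0 with hs0 | hs0
      · rcases eq_or_ne μ 0 with rfl | hμ0
        · have hν0 : ν = 0 := by simpa using hs0
          subst hν0
          rw [hE0span] at ha hb
          obtain ⟨s, rfl⟩ := Submodule.mem_span_singleton.mp ha
          obtain ⟨t, rfl⟩ := Submodule.mem_span_singleton.mp hb
          simp
        · rcases eq_or_ne (E μ) ⊥ with hEb | hEb
          · rw [hEb] at ha; rw [Submodule.mem_bot] at ha; simp [ha]
          rcases eq_or_ne (E ν) ⊥ with hEb2 | hEb2
          · rw [hEb2] at hb; rw [Submodule.mem_bot] at hb; simp [hb]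
          exfalso
          have hμW : μ ∈ W := (hmemW μ).mpr hEb
          have hνW : ν ∈ W := (hmemW ν).mpr hEb2
          have hνμ : ν = -μ := by linear_combination hs0
          exact hA μ hμW hμ0 (hνμ ▸ hνW)
      · have hle : E (μ + ν) ≤ m := by
          refine le_iSup_of_le (μ + ν) ?_
          exact le_iSup (fun _ : μ + ν ≠ 0 => E (μ + ν)) hs0
        exact hle (hbr_mem μ ν a b ha hb)
    have hmtop : m = ⊤ := aux_perfect_span hperf m hbrm
    rw [hmtop, finrank_top, hdim] at hrank
    have hE01 : finrank ℂ (E 0) = 1 := hd01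
    omega
  · -- Case B: weights are {0, l, -l} with dims (2,1,1)
    have hdl' : finrank ℂ (E l) = 1 := hdl
    have hdnl' : finrank ℂ (E (-l)) = 1 := hdnl
    have hd02' : finrank ℂ (E 0) = 2 := hd02
    have hEbot : ∀ μ : ℂ, μ ≠ 0 → μ ≠ l → μ ≠ -l → E μ = ⊥ := by
      intro μ h1 h2 h3
      by_contra hc
      have hμW := (hmemW μ).mpr hc
      rw [hWeq] at hμW
      simp only [Finset.mem_insert, Finset.mem_singleton] at hμW
      tauto
    have hElne : E l ≠ ⊥ := by
      intro hb
      rw [hb, finrank_bot] at hdl'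
      omega
    have hEnlne : E (-l) ≠ ⊥ := by
      intro hb
      rw [hb, finrank_bot] at hdnl'
      omega
    obtain ⟨e, heE, he0⟩ := Submodule.exists_mem_ne_zero_of_ne_bot hElne
    obtain ⟨u, huE, hu0⟩ := Submodule.exists_mem_ne_zero_of_ne_bot hEnlne
    have hEl : E l = Submodule.span ℂ {e} := aux_dim_one_span hdl' heE he0
    have hEnl : E (-l) = Submodule.span ℂ {u} := aux_dim_one_span hdnl' huE hu0
    have hxe : ⁅x, e⁆ = l • e := by
      have := aux_one_dim_eigen f l hdl' e heE
      rwa [hfapp] at this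
    have hxu : ⁅x, u⁆ = (-l) • u := by
      have := aux_one_dim_eigen f (-l) hdnl' u huE
      rwa [hfapp] at this
    set h : g := ⁅e, u⁆ with hhdef
    have hhE0 : h ∈ E 0 := by
      have := hbr_mem l (-l) e u heE huE
      simpa using this
    have hxh : ⁅x, h⁆ = 0 := by
      rw [hhdef, leibniz_lie, hxe, hxu, smul_lie, lie_smul]
      module
    -- find y, w such that E 0 = span {x, y}, ⁅x, y⁆ ∈ ℂw, h ∈ ℂw
    obtain ⟨y, w, hyE0, hynx, hw0, hxyw, hhw⟩ : ∃ y w : g, y ∈ E 0 ∧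
        y ∉ Submodule.span ℂ {x} ∧ w ≠ 0 ∧ ⁅x, y⁆ ∈ Submodule.span ℂ {w} ∧
        h ∈ Submodule.span ℂ {w} := by
      by_cases hhx : h ∈ Submodule.span ℂ {x}
      · -- generic y; w = x
        have hlt : Submodule.span ℂ {x} < E 0 := by
          refine lt_of_le_of_ne ((Submodule.span_singleton_le_iff_mem x _).mpr hx0) ?_
          intro he
          rw [← he, finrank_span_singleton hx_ne] at hd02'
          omega
        obtain ⟨y, hyE0, hynx⟩ := SetLike.exists_of_lt hlt
        refine ⟨y, x, hyE0, hynx, hx_ne, ?_, hhx⟩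
        -- show ⁅x, y⁆ ∈ ℂ x by nilpotency of f on E 0
        have hspan2 : Submodule.span ℂ ({x, y} : Set g) ≤ E 0 := by
          rw [Submodule.span_le]
          rintro z (rfl | rfl)
          · exact hx0
          · exact hyE0
        have hE0span2 : E 0 = Submodule.span ℂ ({x, y} : Set g) :=
          (Submodule.eq_of_le_of_finrank_le hspan2 (by
            rw [hd02', aux_span_pair_dim_two hx_ne hynx])).symm
        have hfy : ⁅x, y⁆ ∈ E 0 := by
          have := hbr_mem 0 0 x y hx0 hyE0
          simpa using this
        rw [hE0span2] at hfy
        obtain ⟨s, t, hst⟩ := Submodule.mem_span_pair.mp hfy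
        have hfx : f x = 0 := by rw [hfapp, lie_self]
        have hiter : ∀ k : ℕ, (f ^ (k+1)) y = (t^k * s) • x + t^(k+1) • y := by
          intro k
          induction k with
          | zero =>
            rw [pow_one, hfapp, ← hst]
            module
          | succ k ih =>
            rw [pow_succ', Module.End.mul_apply, ih, map_add, map_smul, map_smul, hfx,
              hfapp, ← hst]
            module
        have hynz : y ≠ 0 := fun hy => hynx (hy ▸ Submodule.zero_mem _)
        obtain ⟨k0, hk0⟩ := (Module.End.mem_maxGenEigenspace f 0 y).mp hyE0
        have hk0' : (f ^ (k0 + 1)) y = 0 := by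
          have hfk : (f ^ k0) y = 0 := by simpa using hk0
          rw [pow_succ', Module.End.mul_apply, hfk, map_zero]
        rw [hiter k0] at hk0'
        have ht0 : t = 0 := by
          have := (aux_indep hx_ne hynx hk0').2
          exact pow_eq_zero_iff (Nat.succ_ne_zero k0) |>.mp this
        rw [← hst, ht0]
        simpa using Submodule.smul_mem _ s (Submodule.mem_span_singleton_self x)
      · -- y = w = h
        have hh0 : h ≠ 0 := fun hz => hhx (hz ▸ Submodule.zero_mem _)
        exact ⟨h, h, hhE0, hhx, hh0, by rw [hxh]; exact Submodule.zero_mem _,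
          Submodule.mem_span_singleton_self h⟩
    have hspan2 : Submodule.span ℂ ({x, y} : Set g) ≤ E 0 := by
      rw [Submodule.span_le]
      rintro z (rfl | rfl)
      · exact hx0
      · exact hyE0
    have hE0span2 : E 0 = Submodule.span ℂ ({x, y} : Set g) :=
      (Submodule.eq_of_le_of_finrank_le hspan2 (by
        rw [hd02', aux_span_pair_dim_two hx_ne hynx])).symm
    -- the target subspace
    set V : Submodule ℂ g := Submodule.span ℂ {w} ⊔ (E l ⊔ E (-l)) with hVdef
    have hVrank : finrank ℂ V ≤ 3 := by
      have t1 := Submodule.finrank_sup_add_finrank_inf_eq (E l) (E (-l))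
      have t2 := Submodule.finrank_sup_add_finrank_inf_eq
        (Submodule.span ℂ ({w} : Set g)) (E l ⊔ E (-l))
      have t3 : finrank ℂ (Submodule.span ℂ ({w} : Set g)) = 1 := finrank_span_singleton hw0
      rw [hVdef]
      omega
    have hbrV : ∀ a b : g, ⁅a, b⁆ ∈ V := by
      refine aux_pairs hsup ?_
      intro μ ν a ha b hb
      rcases eq_or_ne (E μ) ⊥ with hEb | hEb
      · rw [hEb, Submodule.mem_bot] at ha; simp [ha]
      rcases eq_or_ne (E ν) ⊥ with hEb2 | hEb2
      · rw [hEb2, Submodule.mem_bot] at hb; simp [hb]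
      have hwV : Submodule.span ℂ ({w} : Set g) ≤ V := le_sup_left
      have hlV : E l ≤ V := le_sup_of_le_right le_sup_left
      have hnlV : E (-l) ≤ V := le_sup_of_le_right le_sup_right
      have hμ3 : μ = 0 ∨ μ = l ∨ μ = -l := by
        by_contra hc
        push_neg at hc
        exact hEb (hEbot μ hc.1 hc.2.1 hc.2.2)
      have hν3 : ν = 0 ∨ ν = l ∨ ν = -l := by
        by_contra hc
        push_neg at hc
        exact hEb2 (hEbot ν hc.1 hc.2.1 hc.2.2)
      have hyx : ⁅y, x⁆ = -⁅x, y⁆ := (lie_skew y x).symm ▸ rfl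
      rcases hμ3 with hμe | hμe | hμe <;> rcases hν3 with hνe | hνe | hνe <;>
        rw [hμe] at ha <;> rw [hνe] at hb
      · -- (0,0)
        rw [hE0span2] at ha hb
        obtain ⟨a1, a2, rfl⟩ := Submodule.mem_span_pair.mp ha
        obtain ⟨b1, b2, rfl⟩ := Submodule.mem_span_pair.mp hb
        have hexp : ⁅a1 • x + a2 • y, b1 • x + b2 • y⁆ = (a1 * b2 - a2 * b1) • ⁅x, y⁆ := by
          simp only [add_lie, lie_add, smul_lie, lie_smul, lie_self, smul_zero, zero_add,
            add_zero, smul_smul]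
          rw [show ⁅y, x⁆ = -⁅x, y⁆ from (lie_skew y x).symm ▸ rfl]
          module
        rw [hexp]
        exact hwV (Submodule.smul_mem _ _ hxyw)
      · -- (0, l)
        have := hbr_mem 0 l _ _ ha hb
        rw [zero_add] at this
        exact hlV this
      · -- (0, -l)
        have := hbr_mem 0 (-l) _ _ ha hb
        rw [zero_add] at this
        exact hnlV this
      · -- (l, 0)
        have := hbr_mem l 0 _ _ ha hb
        rw [add_zero] at this
        exact hlV this
      · -- (l, l)
        have hbb := hbr_mem l l _ _ ha hb
        have : E (l + l) = ⊥ := by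
          refine hEbot _ (fun hc => hl0 (by linear_combination hc/2))
            (fun hc => hl0 (by linear_combination hc))
            (fun hc => hl0 (by linear_combination hc/3))
        rw [this, Submodule.mem_bot] at hbb
        rw [hbb]
        exact V.zero_mem
      · -- (l, -l)
        rw [hEl] at ha
        rw [hEnl] at hb
        obtain ⟨s, rfl⟩ := Submodule.mem_span_singleton.mp ha
        obtain ⟨t, rfl⟩ := Submodule.mem_span_singleton.mp hb
        have : ⁅s • e, t • u⁆ = (s * t) • h := by
          rw [hhdef, smul_lie, lie_smul, smul_smul]
        rw [this]
        exact hwV (Submodule.smul_mem _ _ hhw)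
      · -- (-l, 0)
        have := hbr_mem (-l) 0 _ _ ha hb
        rw [add_zero] at this
        exact hnlV this
      · -- (-l, l)
        rw [hEnl] at ha
        rw [hEl] at hb
        obtain ⟨s, rfl⟩ := Submodule.mem_span_singleton.mp ha
        obtain ⟨t, rfl⟩ := Submodule.mem_span_singleton.mp hb
        have : ⁅s • u, t • e⁆ = (-(s * t)) • h := by
          rw [hhdef, smul_lie, lie_smul, smul_smul]
          rw [show ⁅u, e⁆ = -⁅e, u⁆ from (lie_skew u e).symm ▸ rfl]
          module
        rw [this]
        exact hwV (Submodule.smul_mem _ _ hhw)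
      · -- (-l, -l)
        have hbb := hbr_mem (-l) (-l) _ _ ha hb
        have : E (-l + -l) = ⊥ := by
          refine hEbot _ (fun hc => hl0 (by linear_combination -hc/2))
            (fun hc => hl0 (by linear_combination -hc/3))
            (fun hc => hl0 (by linear_combination -hc))
        rw [this, Submodule.mem_bot] at hbb
        rw [hbb]
        exact V.zero_mem
    have hVtop : V = ⊤ := aux_perfect_span hperf V hbrV
    rw [hVtop, finrank_top, hdim] at hVrank
    omega

end Main


/-- For a 4-dimensional complex Lie algebra `g`, the derived algebra ⁅g,g⁆ is a proper
ideal of `g`. -/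
theorem stmt3 (g : Type*) [LieRing g] [LieAlgebra ℂ g] [FiniteDimensional ℂ g]
    (hdim : Module.finrank ℂ g = 4) :
    ⁅(⊤ : LieIdeal ℂ g), (⊤ : LieIdeal ℂ g)⁆ ≠ ⊤ := by
  intro hperf
  exact aux_main hdim hperf
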